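/- arXiv:1712.00478 — 2 statements merged into one kernel-verified Lean document; each statement's English description precedes it below -/
import Mathlib

section
/- Let K be a nonempty compact Hausdorff space. Then there exists a point x ∈ K such that w(U) = w(K) for every neighborhood U of x. -/
open Cardinal TopologicalSpace

noncomputable def weight (X : Type u) [TopologicalSpace X] : Cardinal.{u} :=
  ⨅ B : {B : Set (Set X) // TopologicalSpace.IsTopologicalBasis B}, max #B.1 ℵ₀

instance instNEB (X : Type u) [TopologicalSpace X] :
    Nonempty {B : Set (Set X) // TopologicalSpace.IsTopologicalBasis B} :=
  ⟨⟨_, isTopologicalBasis_opens⟩⟩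

lemma weight_le_basis {X : Type u} [TopologicalSpace X] {B : Set (Set X)}
    (hB : IsTopologicalBasis B) : weight X ≤ max #B ℵ₀ :=
  ciInf_le' _ (⟨B, hB⟩ : {B : Set (Set X) // IsTopologicalBasis B})

lemma aleph0_le_weight (X : Type u) [TopologicalSpace X] : ℵ₀ ≤ weight X :=
  le_ciInf fun _ => le_max_right _ _

lemma exists_basis_weight (X : Type u) [TopologicalSpace X] :
    ∃ B : Set (Set X), IsTopologicalBasis B ∧ weight X = max #B ℵ₀ := by
  obtain ⟨B, hB⟩ := Set.mem_range.mp <| csInf_mem <| Set.range_nonempty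
    (fun B : {B : Set (Set X) // TopologicalSpace.IsTopologicalBasis B} => max #B.1 ℵ₀)
  exact ⟨B.1, B.2, hB.symm⟩

lemma weight_le_of_inducing {X Y : Type u} [TopologicalSpace X] [TopologicalSpace Y]
    {f : X → Y} (hf : Topology.IsInducing f) : weight X ≤ weight Y := by
  obtain ⟨B, hB, hEq⟩ := exists_basis_weight Y
  calc weight X ≤ max #((f ⁻¹' ·) '' B) ℵ₀ := weight_le_basis (hB.isInducing hf)
    _ ≤ max #B ℵ₀ := max_le_max Cardinal.mk_image_le le_rfl
    _ = weight Y := hEq.symm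

/-- Every nonempty compact Hausdorff space `K` has a point all of whose neighborhoods have
weight equal to `w(K)`. -/
theorem statement6 (K : Type u) [TopologicalSpace K] [CompactSpace K] [T2Space K] [Nonempty K] :
    ∃ x : K, ∀ U ∈ nhds x, weight U = weight K := by
  by_contra h
  push_neg at h
  choose U hU hne using h
  choose V hVU hVo hxV using fun x => mem_nhds_iff.mp (hU x)
  have hVlt : ∀ x, weight (V x) < weight K := fun x =>
    lt_of_le_of_lt
      (weight_le_of_inducing (Topology.IsEmbedding.inclusion (hVU x)).toIsInducing)
      (lt_of_le_of_ne (weight_le_of_inducing Topology.IsInducing.subtypeVal) (hne x))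
  obtain ⟨t, ht⟩ := IsCompact.elim_finite_subcover isCompact_univ V hVo
    (fun x _ => Set.mem_iUnion.mpr ⟨x, hxV x⟩)
  have htne : t.Nonempty := by
    obtain ⟨x⟩ := ‹Nonempty K›
    obtain ⟨i, hi, _⟩ := Set.mem_iUnion₂.mp (ht (Set.mem_univ x))
    exact ⟨i, hi⟩
  choose B hB hBw using fun i => exists_basis_weight (V i)
  set μ := t.sup' htne (fun i => weight (V i)) with hμ
  obtain ⟨i₀, hi₀, hμeq⟩ := Finset.exists_mem_eq_sup' htne (fun i => weight (V i))
  have hμlt : μ < weight K := by rw [hμ, hμeq]; exact hVlt i₀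
  have haμ : ℵ₀ ≤ μ := by rw [hμ, hμeq]; exact aleph0_le_weight _
  set C : Set (Set K) := ⋃ i : ↥t, (fun b => (Subtype.val : V i.1 → K) '' b) '' (B i.1) with hC
  have hCbasis : IsTopologicalBasis C := by
    refine isTopologicalBasis_of_isOpen_of_nhds ?_ ?_
    · intro u hu
      simp only [hC, Set.mem_iUnion, Set.mem_image] at hu
      obtain ⟨i, b, hb, rfl⟩ := hu
      exact (hVo i.1).isOpenMap_subtype_val b ((hB i.1).isOpen hb)
    · intro a u hau hu
      obtain ⟨i, hi, hai⟩ := Set.mem_iUnion₂.mp (ht (Set.mem_univ a))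
      obtain ⟨v, hv, hav, hvu⟩ := (hB i).exists_subset_of_mem_open
        (show (⟨a, hai⟩ : V i) ∈ (Subtype.val : V i → K) ⁻¹' u from hau)
        (hu.preimage continuous_subtype_val)
      refine ⟨Subtype.val '' v, ?_, ⟨⟨a, hai⟩, hav, rfl⟩, ?_⟩
      · exact Set.mem_iUnion.mpr ⟨⟨i, hi⟩, ⟨v, hv, rfl⟩⟩
      · rintro _ ⟨y, hy, rfl⟩
        exact hvu hy
  have hCcard : #C ≤ μ := by
    have h1 : #C ≤ #(↥t) * ⨆ i : ↥t, #((fun b => (Subtype.val : V i.1 → K) '' b) '' (B i.1)) :=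
      Cardinal.mk_iUnion_le _
    have h2 : ∀ i : ↥t, #((fun b => (Subtype.val : V i.1 → K) '' b) '' (B i.1)) ≤ μ := by
      intro i
      calc _ ≤ #(B i.1) := Cardinal.mk_image_le
        _ ≤ max #(B i.1) ℵ₀ := le_max_left _ _
        _ = weight (V i.1) := (hBw i.1).symm
        _ ≤ μ := Finset.le_sup' (fun i => weight (V i)) i.2
    have h3 : #(↥t) ≤ ℵ₀ := le_of_lt (Cardinal.lt_aleph0_of_finite _)
    have : Nonempty ↥t := htne.to_subtype
    calc #C ≤ #(↥t) * ⨆ i : ↥t, #((fun b => (Subtype.val : V i.1 → K) '' b) '' (B i.1)) := h1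
      _ ≤ ℵ₀ * μ := mul_le_mul' h3 (ciSup_le h2)
      _ ≤ μ * μ := mul_le_mul' haμ le_rfl
      _ = μ := Cardinal.mul_eq_self haμ
  have : weight K ≤ μ := by
    calc weight K ≤ max #C ℵ₀ := weight_le_basis hCbasis
      _ ≤ max μ ℵ₀ := max_le_max hCcard le_rfl
      _ = μ := max_eq_left haμ
  exact absurd (lt_of_le_of_lt this hμlt) (lt_irrefl _)
end

section
/- Let K be an infinite compact Hausdorff space whose topology is the order topology of some linear order on K. Then the closed unit ball of C(K) contains a 2-equilateral set of cardinality w(K). -/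
open Cardinal Set TopologicalSpace

universe u

lemma equilateral_of_family {K : Type u} [TopologicalSpace K] [CompactSpace K] [T2Space K]
    {I : Type u} (x : I → K) (C : I → Set K)
    (hC : ∀ i, IsClosed (C i)) (hx : ∀ i, x i ∉ C i)
    (hpair : ∀ i j, i ≠ j → x i ∈ C j ∨ x j ∈ C i) :
    ∃ A : Set C(K, ℝ), A ⊆ Metric.closedBall 0 1 ∧ #A = #I ∧
      ∀ f ∈ A, ∀ g ∈ A, f ≠ g → ‖f - g‖ = 2 := by
  have key : ∀ i, ∃ f : C(K, ℝ), f (x i) = 1 ∧ (∀ z ∈ C i, f z = -1) ∧ ∀ z, |f z| ≤ 1 := by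
    intro i
    obtain ⟨g, hg0, hg1, hg01⟩ := exists_continuous_zero_one_of_isClosed (hC i)
      (isClosed_singleton (x := x i)) (by simpa [Set.disjoint_singleton_right] using hx i)
    refine ⟨(2 : ℝ) • g - ContinuousMap.const K 1, ?_, ?_, ?_⟩
    · simp [hg1 (mem_singleton _)]; norm_num
    · intro z hz; simp [hg0 hz]
    · intro z
      have := hg01 z
      simp only [ContinuousMap.sub_apply, ContinuousMap.smul_apply, ContinuousMap.const_apply,
        smul_eq_mul]
      rw [abs_le]; constructor <;> nlinarith [this.1, this.2]
  choose f hf1 hfm1 hfle using key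
  have hnorm : ∀ i, ‖f i‖ ≤ 1 := fun i => ContinuousMap.norm_le _ zero_le_one |>.mpr
    (fun z => by simpa using hfle i z)
  have hdist : ∀ i j, i ≠ j → ‖f i - f j‖ = 2 := by
    intro i j hij
    have hle : ‖f i - f j‖ ≤ 2 := by
      refine ContinuousMap.norm_le _ (by norm_num) |>.mpr fun z => ?_
      have := hfle i z; have := hfle j z
      simp only [ContinuousMap.sub_apply, Real.norm_eq_abs]
      rw [abs_le] at *; constructor <;> linarith [ (hfle i z), (hfle j z)]
    have hge : 2 ≤ ‖f i - f j‖ := by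
      rcases hpair i j hij with h | h
      · have := ContinuousMap.norm_coe_le_norm (f i - f j) (x i)
        have h1 : f i (x i) = 1 := hf1 i
        have h2 : f j (x i) = -1 := hfm1 j _ h
        simp only [ContinuousMap.sub_apply, h1, h2, Real.norm_eq_abs] at this
        norm_num at this; linarith
      · have := ContinuousMap.norm_coe_le_norm (f i - f j) (x j)
        have h1 : f j (x j) = 1 := hf1 j
        have h2 : f i (x j) = -1 := hfm1 i _ h
        simp only [ContinuousMap.sub_apply, h1, h2, Real.norm_eq_abs] at this
        norm_num at this; linarith
    linarith
  have hinj : Function.Injective f := by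
    intro i j h
    by_contra hij
    have := hdist i j hij
    rw [h] at this; simp at this
  refine ⟨Set.range f, ?_, ?_, ?_⟩
  · rintro _ ⟨i, rfl⟩
    simpa [Metric.mem_closedBall, dist_zero_right] using hnorm i
  · exact Cardinal.mk_range_eq f hinj
  · rintro _ ⟨i, rfl⟩ _ ⟨j, rfl⟩ hne
    exact hdist i j (fun h => hne (by rw [h]))

def jumps (K : Type u) [LinearOrder K] : Set (K × K) :=
  {p | p.1 < p.2 ∧ ∀ z, z ≤ p.1 ∨ p.2 ≤ z}

lemma weight_le_of_dense {K : Type u} [LinearOrder K] [TopologicalSpace K] [OrderTopology K]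
    {S : Set K} (hS : Dense S) :
    weight K ≤ max (max #S #(jumps K)) ℵ₀ := by
  classical
  set E : Set K := S ∪ Prod.fst '' jumps K ∪ Prod.snd '' jumps K with hE
  let F : (↥E × ↥E) ⊕ (↥E ⊕ (↥E ⊕ PUnit.{u+1})) → Set K := fun z =>
    match z with
    | Sum.inl (a, b) => Ioo a.1 b.1
    | Sum.inr (Sum.inl a) => Ioi a.1
    | Sum.inr (Sum.inr (Sum.inl b)) => Iio b.1
    | Sum.inr (Sum.inr (Sum.inr _)) => univ
  have hbasis : IsTopologicalBasis (Set.range F) := by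
    refine isTopologicalBasis_of_isOpen_of_nhds ?_ ?_
    · rintro _ ⟨z, rfl⟩
      rcases z with ⟨a, b⟩ | a | b | _
      · exact isOpen_Ioo
      · exact isOpen_Ioi
      · exact isOpen_Iio
      · exact isOpen_univ
    · intro a u hau hu
      have hnhds : u ∈ nhds a := hu.mem_nhds hau
      have hleft : (∃ l, l < a) → ∃ e ∈ E, e < a ∧ Ioc e a ⊆ u := by
        intro h
        obtain ⟨l, hl, hsub⟩ := exists_Ioc_subset_of_mem_nhds hnhds h
        by_cases hne : (Ioo l a).Nonempty
        · obtain ⟨s, hsS, hs⟩ := hS.exists_mem_open isOpen_Ioo hne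
          exact ⟨s, Or.inl (Or.inl hsS), hs.2, (Ioc_subset_Ioc_left hs.1.le).trans hsub⟩
        · have hj : (l, a) ∈ jumps K := by
            refine ⟨hl, fun z => ?_⟩
            by_contra hz
            push_neg at hz
            exact hne ⟨z, hz.1, hz.2⟩
          exact ⟨l, Or.inl (Or.inr ⟨(l, a), hj, rfl⟩), hl, hsub⟩
      have hright : (∃ r, a < r) → ∃ e ∈ E, a < e ∧ Ico a e ⊆ u := by
        intro h
        obtain ⟨r, hr, hsub⟩ := exists_Ico_subset_of_mem_nhds hnhds h
        by_cases hne : (Ioo a r).Nonempty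
        · obtain ⟨s, hsS, hs⟩ := hS.exists_mem_open isOpen_Ioo hne
          exact ⟨s, Or.inl (Or.inl hsS), hs.1, (Ico_subset_Ico_right hs.2.le).trans hsub⟩
        · have hj : (a, r) ∈ jumps K := by
            refine ⟨hr, fun z => ?_⟩
            by_contra hz
            push_neg at hz
            exact hne ⟨z, hz.1, hz.2⟩
          exact ⟨r, Or.inr ⟨(a, r), hj, rfl⟩, hr, hsub⟩
      by_cases hL : ∃ l, l < a
      · obtain ⟨el, helE, hel, hsubl⟩ := hleft hL
        by_cases hR : ∃ r, a < r
        · obtain ⟨er, herE, her, hsubr⟩ := hright hR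
          refine ⟨Ioo el er, ⟨Sum.inl (⟨el, helE⟩, ⟨er, herE⟩), rfl⟩, ⟨hel, her⟩, ?_⟩
          intro y hy
          rcases le_total y a with h | h
          · exact hsubl ⟨hy.1, h⟩
          · exact hsubr ⟨h, hy.2⟩
        · push_neg at hR
          refine ⟨Ioi el, ⟨Sum.inr (Sum.inl ⟨el, helE⟩), rfl⟩, hel, ?_⟩
          intro y hy
          exact hsubl ⟨hy, hR y⟩
      · push_neg at hL
        by_cases hR : ∃ r, a < r
        · obtain ⟨er, herE, her, hsubr⟩ := hright hR
          refine ⟨Iio er, ⟨Sum.inr (Sum.inr (Sum.inl ⟨er, herE⟩)), rfl⟩, her, ?_⟩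
          intro y hy
          exact hsubr ⟨hL y, hy⟩
        · push_neg at hR
          refine ⟨univ, ⟨Sum.inr (Sum.inr (Sum.inr PUnit.unit)), rfl⟩, mem_univ _, ?_⟩
          intro y _
          have : y = a := le_antisymm (hR y) (hL y)
          rwa [this]
  have hwle : weight K ≤ max #(Set.range F) ℵ₀ :=
    ciInf_le (OrderBot.bddBelow _) (⟨Set.range F, hbasis⟩ : {B : Set (Set K) // IsTopologicalBasis B})
  set m : Cardinal.{u} := max (max #S #(jumps K)) ℵ₀ with hm
  have hminf : ℵ₀ ≤ m := le_max_right _ _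
  have hSm : #S ≤ m := le_trans (le_max_left _ _) (le_max_left _ _)
  have hJm : #(jumps K) ≤ m := le_trans (le_max_right _ _) (le_max_left _ _)
  have hEm : #E ≤ m := by
    refine le_trans (mk_union_le _ _) (Cardinal.add_le_of_le hminf
      (le_trans (mk_union_le _ _) (Cardinal.add_le_of_le hminf hSm
        (le_trans (mk_image_le) hJm))) (le_trans (mk_image_le) hJm))
  have hdom : #((↥E × ↥E) ⊕ (↥E ⊕ (↥E ⊕ PUnit.{u+1}))) ≤ m := by
    rw [mk_sum, mk_sum, mk_sum, mk_prod]
    simp only [Cardinal.lift_id, Cardinal.mk_punit]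
    refine Cardinal.add_le_of_le hminf ?_ (Cardinal.add_le_of_le hminf hEm
      (Cardinal.add_le_of_le hminf hEm (le_trans Cardinal.one_le_aleph0 hminf)))
    exact le_trans (Cardinal.mul_le_max _ _) (max_le (max_le hEm hEm) hminf)
  refine le_trans hwle (max_le (le_trans mk_range_le hdom) hminf)

lemma exists_left_separated {K : Type u} [TopologicalSpace K] {c : Cardinal.{u}}
    (hc : ∀ S : Set K, #S < c → ¬ Dense S) :
    ∃ x : c.ord.ToType → K, ∀ i, x i ∉ closure (x '' {j | j < i}) := by
  classical
  have hstep : ∀ (i : c.ord.ToType) (prev : ∀ j, j < i → K),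
      ∃ y : K, y ∉ closure (Set.range fun p : {j // j < i} => prev p.1 p.2) := by
    intro i prev
    have hcard : #(Set.range fun p : {j // j < i} => prev p.1 p.2) < c :=
      lt_of_le_of_lt mk_range_le (by exact Cardinal.mk_Iio_ord_toType i)
    have hnd := hc _ hcard
    rw [Dense] at hnd
    push_neg at hnd
    exact hnd
  let x : c.ord.ToType → K := WellFoundedLT.fix (motive := fun _ => K)
    (fun i prev => Classical.choose (hstep i prev))
  have hx : ∀ i, x i = Classical.choose (hstep i (fun j _ => x j)) := fun i =>
    WellFoundedLT.fix_eq _ i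
  refine ⟨x, fun i => ?_⟩
  have hspec := Classical.choose_spec (hstep i (fun j _ => x j))
  rw [← hx i] at hspec
  convert hspec using 2
  rw [Set.image_eq_range]
  rfl

lemma jumps_pairwise {K : Type u} [LinearOrder K] {p q : K × K}
    (hp : p ∈ jumps K) (hq : q ∈ jumps K) (hne : p ≠ q) :
    p.2 ≤ q.1 ∨ q.2 ≤ p.1 := by
  obtain ⟨a, b⟩ := p
  obtain ⟨a', b'⟩ := q
  obtain ⟨hab, hp2⟩ := hp
  obtain ⟨hab', hq2⟩ := hq
  simp only at hab hab' hp2 hq2 ⊢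
  rcases hp2 a' with h1 | h1
  · rcases hq2 a with h2 | h2
    · have haa : a = a' := le_antisymm h2 h1
      subst haa
      rcases hp2 b' with h3 | h3
      · exact absurd h3 (not_le.mpr hab')
      · rcases hq2 b with h4 | h4
        · exact absurd h4 (not_le.mpr hab)
        · exact absurd (by rw [le_antisymm h4 h3]) hne
    · exact Or.inr h2
  · exact Or.inl h1

/-- If `K` is an infinite compact line (a linearly ordered set, compact in its order topology),
then the closed unit ball of `C(K)` contains a `2`-equilateral set of cardinality `w(K)`. -/
theorem statement10 (K : Type u) [LinearOrder K] [TopologicalSpace K] [OrderTopology K]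
    [CompactSpace K] [Infinite K] :
    ∃ A : Set C(K, ℝ), A ⊆ Metric.closedBall 0 1 ∧ #A = weight K ∧
      ∀ f ∈ A, ∀ g ∈ A, f ≠ g → ‖f - g‖ = 2 := by
  classical
  by_cases hB : ∃ S : Set K, Dense S ∧ #S < weight K
  · -- dense small set exists: use jumps
    obtain ⟨S, hS, hSlt⟩ := hB
    have hSinf : ℵ₀ ≤ #S := by
      by_contra h
      push_neg at h
      rw [Cardinal.lt_aleph0_iff_set_finite] at h
      have hcl : closure S = S := h.isClosed.closure_eq
      have hSu : S = Set.univ := by rw [← hcl]; exact hS.closure_eq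
      exact (Set.infinite_univ (α := K)) (hSu ▸ h)
    have hw := weight_le_of_dense hS
    have hJ : weight K ≤ #(jumps K) := by
      rcases le_max_iff.mp hw with h | h
      · rcases le_max_iff.mp h with h' | h'
        · exact absurd (lt_of_le_of_lt h' hSlt) (lt_irrefl _)
        · exact h'
      · exact absurd (lt_of_le_of_lt (h.trans hSinf) hSlt) (lt_irrefl _)
    obtain ⟨p, hp⟩ := Cardinal.le_mk_iff_exists_set.mp hJ
    have key := equilateral_of_family (K := K) (I := ↥p)
      (fun q => (q.1.1).1) (fun q => Ici (q.1.1).2)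
      (fun q => isClosed_Ici)
      (fun q => by
        have hlt := q.1.2.1
        simp only [mem_Ici]
        exact fun h => absurd (lt_of_lt_of_le hlt h) (lt_irrefl _))
      (fun q r hqr => by
        have hne : (q.1 : K × K) ≠ r.1 := by
          intro h
          exact hqr (Subtype.ext (Subtype.ext h))
        rcases jumps_pairwise q.1.2 r.1.2 hne with h | h
        · exact Or.inr (mem_Ici.mpr h)
        · exact Or.inl (mem_Ici.mpr h))
    obtain ⟨A, hA1, hA2, hA3⟩ := key
    exact ⟨A, hA1, by rw [hA2, hp], hA3⟩
  · -- no small dense set: left-separated sequence of length weight K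
    push_neg at hB
    have hA : ∀ S : Set K, #S < weight K → ¬ Dense S := fun S h hd => absurd h (not_lt.mpr (hB S hd))
    obtain ⟨x, hx⟩ := exists_left_separated hA
    have key := equilateral_of_family (K := K) (I := (weight K).ord.ToType)
      x (fun i => closure (x '' {j | j < i}))
      (fun i => isClosed_closure)
      hx
      (fun i j hij => by
        rcases lt_or_gt_of_ne hij with h | h
        · exact Or.inl (subset_closure ⟨i, h, rfl⟩)
        · exact Or.inr (subset_closure ⟨j, h, rfl⟩))
    obtain ⟨A, hA1, hA2, hA3⟩ := key
    refine ⟨A, hA1, ?_, hA3⟩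
    rw [hA2, Cardinal.mk_toType, Cardinal.card_ord]
end
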